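/- For positive integers μ_1, μ_2, the genus-0 part of the disconnected-to-connected reduction for two-point double Hurwitz numbers is: DH_{0,2}(μ_1, μ_2) = (1/(μ_1 μ_2)) Σ_{a=1}^{μ_2} a · (Σ_{λ ⊢ μ_1+a} (μ_1 s)^{ℓ(λ)} q_λ/|Aut(λ)|) · (Σ_{λ ⊢ μ_2−a} (μ_2 s)^{ℓ(λ)} q_λ/|Aut(λ)|) when restricted to the coefficient of s^{(number of q-factors)} matching genus 0; equivalently, DH_{0,2}(μ_1, μ_2) = −[X_1^{μ_1} X_2^{μ_2}] Σ_{a≥1} z_1^{−a} z_2^{a}/a, where z_i^{±a} are expanded in X_i = z_i e^{−sQ(z_i)} via Lagrange inversion. -/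

import Mathlib

open PowerSeries Finset

/-- `|Aut(λ)|`: the product of the factorials of the multiplicities of the parts. -/
def autCard {n : ℕ} (P : n.Partition) : ℕ :=
  ∏ i ∈ P.parts.toFinset, (P.parts.count i).factorial

/-- The coefficient of `z^k` in `exp f`, for a power series `f` with zero constant term. -/
noncomputable def expCoeff (R : Type*) [CommRing R] [Algebra ℚ R]
    (f : PowerSeries R) (k : ℕ) : R :=
  ∑ n ∈ Finset.range (k + 1),
    algebraMap ℚ R ((n.factorial : ℚ))⁻¹ * PowerSeries.coeff (R := R) k (f ^ n)

/-- `Q(z) = ∑_{j=1}^d q_j z^j`. -/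
noncomputable def Qser (R : Type*) [CommRing R] (d : ℕ) (q : ℕ → R) : PowerSeries R :=
  ∑ i ∈ Finset.Icc 1 d, PowerSeries.C (R := R) (q i) * PowerSeries.X ^ i

/-- `X(z) = z · exp(−s Q(z))`. -/
noncomputable def Xser (R : Type*) [CommRing R] [Algebra ℚ R]
    (d : ℕ) (q : ℕ → R) (s : R) : PowerSeries R :=
  PowerSeries.X * PowerSeries.mk (expCoeff R (-(PowerSeries.C (R := R) s * Qser R d q)))

/-- `exp(−a s Q(z))` as a power series, for `a : ℕ`. -/
noncomputable def expNegASQ (R : Type*) [CommRing R] [Algebra ℚ R]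
    (d : ℕ) (q : ℕ → R) (s : R) (a : ℕ) : PowerSeries R :=
  PowerSeries.mk (expCoeff R (-(PowerSeries.C (R := R) ((a : R) * s) * Qser R d q)))

/-- `∑_{λ ⊢ n} x^{ℓ(λ)} q_λ / |Aut(λ)|`. -/
noncomputable def partitionSum (R : Type*) [CommRing R] [Algebra ℚ R]
    (q : ℕ → R) (x : R) (n : ℕ) : R :=
  ∑ P : n.Partition,
    algebraMap ℚ R ((autCard P : ℚ))⁻¹ * x ^ (Multiset.card P.parts) * (P.parts.map q).prod


/-- exp of a power series with zero constant term. -/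
noncomputable def pexp (R : Type*) [CommRing R] [Algebra ℚ R] (f : PowerSeries R) :
    PowerSeries R := PowerSeries.mk (expCoeff R f)

set_option linter.unusedSectionVars false

section Aux
variable {R : Type*} [CommRing R] [Algebra ℚ R]

lemma sum_triangle {M : Type*} [AddCommMonoid M] (k : ℕ) (T : ℕ → ℕ → M)
    (hT : ∀ m n, k < m + n → T m n = 0) :
    ∑ N ∈ range (k+1), ∑ m ∈ range (N+1), T m (N - m)
      = ∑ m ∈ range (k+1), ∑ n ∈ range (k+1), T m n := by
  rw [Finset.sum_sigma', ← Finset.sum_product']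
  rw [← Finset.sum_filter_of_ne (p := fun p : ℕ × ℕ => p.1 + p.2 ≤ k)
    (by intro p _ hp; by_contra hk; exact hp (hT p.1 p.2 (by omega)))]
  refine Finset.sum_nbij' (fun p => (p.2, p.1 - p.2)) (fun p => ⟨p.1 + p.2, p.1⟩) ?_ ?_ ?_ ?_ ?_
  · rintro ⟨N, m⟩ hp
    simp only [Finset.mem_sigma, Finset.mem_range] at hp
    simp only [Finset.mem_filter, Finset.mem_product, Finset.mem_range]
    omega
  · rintro ⟨m, n⟩ hp
    simp only [Finset.mem_filter, Finset.mem_product, Finset.mem_range] at hp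
    simp only [Finset.mem_sigma, Finset.mem_range]
    omega
  · rintro ⟨N, m⟩ hp
    simp only [Finset.mem_sigma, Finset.mem_range] at hp
    simp only [Sigma.mk.inj_iff]
    constructor
    · omega
    · exact heq_of_eq rfl
  · rintro ⟨m, n⟩ hp
    simp only [Finset.mem_filter, Finset.mem_product, Finset.mem_range] at hp
    simp only [Prod.mk.injEq]
    exact ⟨trivial, by omega⟩
  · rintro ⟨N, m⟩ _; rfl


lemma coeff_pow_eq_zero' {f : PowerSeries R} (hf : constantCoeff (R := R) f = 0) {k n : ℕ}
    (h : k < n) : coeff (R := R) k (f ^ n) = 0 := by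
  have : (X : PowerSeries R) ^ n ∣ f ^ n := pow_dvd_pow_of_dvd (X_dvd_iff.2 hf) n
  exact X_pow_dvd_iff.1 this k h
lemma coeff_pexp {f : PowerSeries R} (k : ℕ) :
    coeff (R := R) k (pexp R f) = ∑ n ∈ Finset.range (k + 1),
      algebraMap ℚ R ((n.factorial : ℚ))⁻¹ * coeff (R := R) k (f ^ n) := by
  simp [pexp, expCoeff]
lemma coeff_pexp_of_lt {f : PowerSeries R} (hf : constantCoeff (R := R) f = 0) {k N : ℕ} (h : k < N) :
    coeff (R := R) k (pexp R f) = ∑ n ∈ Finset.range N,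
      algebraMap ℚ R ((n.factorial : ℚ))⁻¹ * coeff (R := R) k (f ^ n) := by
  rw [coeff_pexp]
  apply Finset.sum_subset (by simp; omega)
  intro n hn hn'
  simp only [Finset.mem_range, not_lt] at hn'
  rw [coeff_pow_eq_zero' hf (by omega), mul_zero]
lemma coeff_mul_pow_eq_zero {f g : PowerSeries R} (hf : constantCoeff (R := R) f = 0)
    (hg : constantCoeff (R := R) g = 0) {k m n : ℕ} (h : k < m + n) :
    coeff (R := R) k (f ^ m * g ^ n) = 0 := by
  have : (X : PowerSeries R) ^ (m + n) ∣ f ^ m * g ^ n := by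
    rw [pow_add]
    exact mul_dvd_mul (pow_dvd_pow_of_dvd (X_dvd_iff.2 hf) m)
      (pow_dvd_pow_of_dvd (X_dvd_iff.2 hg) n)
  exact X_pow_dvd_iff.1 this k h

lemma pexp_add {f g : PowerSeries R} (hf : constantCoeff (R := R) f = 0)
    (hg : constantCoeff (R := R) g = 0) : pexp R (f + g) = pexp R f * pexp R g := by
  ext k
  set T : ℕ → ℕ → R := fun m n =>
    algebraMap ℚ R ((m.factorial : ℚ)⁻¹ * (n.factorial : ℚ)⁻¹) * coeff (R := R) k (f ^ m * g ^ n)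
    with hT
  have hT0 : ∀ m n, k < m + n → T m n = 0 := fun m n h => by
    rw [hT]; dsimp only; rw [coeff_mul_pow_eq_zero hf hg h, mul_zero]
  have hR : coeff (R := R) k (pexp R f * pexp R g) = ∑ m ∈ range (k+1), ∑ n ∈ range (k+1), T m n := by
    rw [coeff_mul]
    have : ∀ p ∈ antidiagonal k, coeff (R := R) p.1 (pexp R f) * coeff (R := R) p.2 (pexp R g)
        = ∑ m ∈ range (k+1), ∑ n ∈ range (k+1),
            algebraMap ℚ R ((m.factorial:ℚ)⁻¹ * (n.factorial:ℚ)⁻¹)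
              * (coeff (R := R) p.1 (f^m) * coeff (R := R) p.2 (g^n)) := by
      intro p hp
      rw [Finset.HasAntidiagonal.mem_antidiagonal] at hp
      rw [coeff_pexp_of_lt hf (show p.1 < k+1 by omega),
          coeff_pexp_of_lt hg (show p.2 < k+1 by omega), Finset.sum_mul_sum]
      refine Finset.sum_congr rfl fun m _ => Finset.sum_congr rfl fun n _ => ?_
      rw [map_mul (algebraMap ℚ R)]
      ring
    rw [Finset.sum_congr rfl this, Finset.sum_comm]
    refine Finset.sum_congr rfl fun m _ => ?_
    rw [Finset.sum_comm]
    refine Finset.sum_congr rfl fun n _ => ?_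
    rw [hT]; dsimp only
    rw [coeff_mul, Finset.mul_sum]
  have hL : coeff (R := R) k (pexp R (f + g)) = ∑ N ∈ range (k+1), ∑ m ∈ range (N+1), T m (N - m) := by
    rw [coeff_pexp]
    refine Finset.sum_congr rfl fun N _ => ?_
    rw [add_pow, map_sum, Finset.mul_sum]
    refine Finset.sum_congr rfl fun m hm => ?_
    rw [Finset.mem_range] at hm
    rw [← map_natCast (C (R := R)) (N.choose m), PowerSeries.coeff_mul_C]
    have hc : ((N.factorial : ℚ))⁻¹ * (N.choose m : ℚ)
        = (m.factorial : ℚ)⁻¹ * ((N - m).factorial : ℚ)⁻¹ := by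
      rw [Nat.cast_choose ℚ (by omega : m ≤ N)]
      have h1 : (N.factorial : ℚ) ≠ 0 := Nat.cast_ne_zero.2 N.factorial_ne_zero
      have h2 : (m.factorial : ℚ) ≠ 0 := Nat.cast_ne_zero.2 m.factorial_ne_zero
      have h3 : (((N - m).factorial : ℚ)) ≠ 0 := Nat.cast_ne_zero.2 (N - m).factorial_ne_zero
      field_simp
    rw [hT]; dsimp only
    rw [← hc, map_mul (algebraMap ℚ R), ← map_natCast (algebraMap ℚ R) (N.choose m)]
    ring
  rw [hL, hR, sum_triangle k T hT0]

lemma pexp_zero : pexp R 0 = 1 := by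
  ext k
  rw [coeff_pexp]
  rcases Nat.eq_zero_or_pos k with rfl | hk
  · simp
  · rw [Finset.sum_eq_zero, PowerSeries.coeff_one, if_neg hk.ne']
    intro n hn
    rcases Nat.eq_zero_or_pos n with rfl | hn'
    · simp [PowerSeries.coeff_one, hk.ne']
    · rw [zero_pow hn'.ne', map_zero, mul_zero]

lemma pexp_nsmul {f : PowerSeries R} (hf : constantCoeff (R := R) f = 0) (a : ℕ) :
    (pexp R f) ^ a = pexp R (a • f) := by
  induction a with
  | zero => simpa using pexp_zero.symm
  | succ m ih =>
      rw [pow_succ, ih, succ_nsmul, pexp_add (by simp [hf]) hf]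

lemma pexp_mul_neg {f : PowerSeries R} (hf : constantCoeff (R := R) f = 0) :
    pexp R f * pexp R (-f) = 1 := by
  rw [← pexp_add hf (by simp [hf]), add_neg_cancel, pexp_zero]

lemma constantCoeff_Qser (d : ℕ) (q : ℕ → R) : constantCoeff (R := R) (Qser R d q) = 0 := by
  rw [Qser, map_sum]
  refine Finset.sum_eq_zero fun i hi => ?_
  rw [Finset.mem_Icc] at hi
  rw [map_mul, map_pow, constantCoeff_X, zero_pow (by omega), mul_zero]

lemma CxQ_eq_sum (d : ℕ) (q : ℕ → R) (x : R) :
    C (R := R) x * Qser R d q = ∑ i ∈ Finset.Icc 1 d, C (R := R) (x * q i) * X ^ i := by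
  rw [Qser, Finset.mul_sum]
  exact Finset.sum_congr rfl fun i _ => by rw [map_mul]; ring

lemma pexp_sum {ι : Type*} (t : Finset ι) (f : ι → PowerSeries R)
    (hf : ∀ i ∈ t, constantCoeff (R := R) (f i) = 0) :
    pexp R (∑ i ∈ t, f i) = ∏ i ∈ t, pexp R (f i) := by
  induction t using Finset.cons_induction with
  | empty => simpa using pexp_zero
  | cons a t ha ih =>
      rw [Finset.sum_cons, Finset.prod_cons,
        pexp_add (hf a (Finset.mem_cons_self a t))
          (by rw [map_sum]; exact Finset.sum_eq_zero fun i hi => hf i (Finset.mem_cons_of_mem hi)),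
        ih (fun i hi => hf i (Finset.mem_cons_of_mem hi))]

lemma coeff_pexp_monomial {i : ℕ} (hi : 1 ≤ i) (c : R) (k : ℕ) :
    coeff (R := R) k (pexp R (C (R := R) c * X ^ i)) =
      if i ∣ k then algebraMap ℚ R (((k / i).factorial : ℚ))⁻¹ * c ^ (k / i) else 0 := by
  rw [coeff_pexp]
  have hterm : ∀ n, coeff (R := R) k ((C (R := R) c * X ^ i) ^ n) = if k = i * n then c ^ n else 0 := by
    intro n
    rw [mul_pow, ← map_pow, ← pow_mul, PowerSeries.coeff_C_mul, PowerSeries.coeff_X_pow]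
    split_ifs <;> simp
  split_ifs with h
  · have hk : i * (k / i) = k := Nat.mul_div_cancel' h
    rw [Finset.sum_eq_single (k / i)]
    · rw [hterm, if_pos hk.symm]
    · intro n hn hne
      have hne' : k ≠ i * n := by
        rintro rfl
        exact hne (Nat.mul_div_cancel_left n (by omega)).symm
      rw [hterm, if_neg hne', mul_zero]
    · intro hn
      exact absurd (Finset.mem_range.2 (Nat.lt_succ_of_le (Nat.div_le_self k i))) hn
  · refine Finset.sum_eq_zero fun n hn => ?_
    rw [hterm, if_neg (fun hkn => h ⟨n, hkn⟩), mul_zero]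

lemma multiset_sum_sum {ι : Type*} (s : Finset ι) (m : ι → Multiset ℕ) :
    (∑ i ∈ s, m i).sum = ∑ i ∈ s, (m i).sum := by
  induction s using Finset.cons_induction with
  | empty => simp
  | cons a t ha ih => simp [Finset.sum_cons, ih]

lemma coeff_pexp_CQ (d : ℕ) (q : ℕ → R) (hq : ∀ i, d < i → q i = 0) (x : R) (n : ℕ) :
    coeff (R := R) n (pexp R (C (R := R) x * Qser R d q)) = partitionSum R q x n := by
  classical
  rw [CxQ_eq_sum, pexp_sum _ _ (fun i hi => by
      rw [Finset.mem_Icc] at hi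
      rw [map_mul, map_pow, constantCoeff_X, zero_pow (by omega), mul_zero]),
    coeff_prod]
  set F : (ℕ →₀ ℕ) → R := fun l => ∏ i ∈ Finset.Icc 1 d,
    if i ∣ l i then algebraMap ℚ R (((l i / i).factorial : ℚ))⁻¹ * (x * q i) ^ (l i / i) else 0
    with hF
  have step0 : ∑ l ∈ finsuppAntidiag (Finset.Icc 1 d) n,
      ∏ i ∈ Finset.Icc 1 d, coeff (R := R) (l i) (pexp R (C (R := R) (x * q i) * X ^ i))
      = ∑ l ∈ finsuppAntidiag (Finset.Icc 1 d) n, F l := by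
    refine Finset.sum_congr rfl fun l _ => Finset.prod_congr rfl fun i hi => ?_
    rw [Finset.mem_Icc] at hi
    exact coeff_pexp_monomial (by omega) _ _
  rw [step0]
  rw [← Finset.sum_filter_of_ne (p := fun l : ℕ →₀ ℕ => ∀ i ∈ Finset.Icc 1 d, i ∣ l i)
    (by
      intro l _ hl
      by_contra hdvd
      push_neg at hdvd
      obtain ⟨i, hi, hnd⟩ := hdvd
      exact hl (Finset.prod_eq_zero hi (if_neg hnd)))]
  -- RHS: restrict partitions
  rw [partitionSum,
    ← Finset.sum_filter_of_ne (s := Finset.univ)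
      (p := fun P : n.Partition => ∀ j ∈ P.parts, j ≤ d)
    (by
      intro P _ hP
      by_contra hbig
      push_neg at hbig
      obtain ⟨j, hj, hjd⟩ := hbig
      have : (0 : R) ∈ P.parts.map q := by
        rw [Multiset.mem_map]
        exact ⟨j, hj, hq j hjd⟩
      rw [Multiset.prod_eq_zero this, mul_zero] at hP
      exact hP rfl)]
  have count_mem : ∀ (P : n.Partition) (i : ℕ), i * P.parts.count i ≠ 0 → i ∈ P.parts := by
    intro P i hne
    by_contra hmem
    rw [Multiset.count_eq_zero_of_notMem hmem, mul_zero] at hne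
    exact hne rfl
  set lP : n.Partition → (ℕ →₀ ℕ) := fun P => Finsupp.onFinset P.parts.toFinset
    (fun i => i * P.parts.count i) (fun i hne => Multiset.mem_toFinset.2 (count_mem P i hne))
    with hlP
  have lP_apply : ∀ (P : n.Partition) (i : ℕ), lP P i = i * P.parts.count i := fun _ _ => rfl
  refine (Finset.sum_bij (fun (P : n.Partition) _ => lP P) ?_ ?_ ?_ ?_).symm
  · -- maps into S₂
    intro P hP
    have hP2 := (Finset.mem_filter.1 hP).2
    have hsub : P.parts.toFinset ⊆ Finset.Icc 1 d := fun j hj => Finset.mem_Icc.2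
      ⟨P.parts_pos (Multiset.mem_toFinset.1 hj), hP2 j (Multiset.mem_toFinset.1 hj)⟩
    rw [Finset.mem_filter]
    refine ⟨Finset.mem_finsuppAntidiag.2 ⟨?_, ?_⟩, fun i _ => Dvd.intro _ rfl⟩
    · show ∑ i ∈ Finset.Icc 1 d, i * P.parts.count i = n
      calc ∑ i ∈ Finset.Icc 1 d, i * P.parts.count i
          = ∑ i ∈ P.parts.toFinset, i * P.parts.count i := (Finset.sum_subset hsub
            (fun i _ hni => by
              rw [Multiset.count_eq_zero_of_notMem
                (fun h => hni (Multiset.mem_toFinset.2 h)), mul_zero])).symm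
        _ = ∑ i ∈ P.parts.toFinset, P.parts.count i • i := by
            refine Finset.sum_congr rfl fun i _ => ?_
            rw [smul_eq_mul, mul_comm]
        _ = P.parts.sum := (Finset.sum_multiset_count P.parts).symm
        _ = n := P.parts_sum
    · exact subset_trans Finsupp.support_onFinset_subset hsub
  · -- injective
    intro P hP P' hP' h
    have hcount : ∀ j, P.parts.count j = P'.parts.count j := by
      intro j
      rcases Nat.eq_zero_or_pos j with rfl | hj
      · rw [Multiset.count_eq_zero_of_notMem (fun hm => absurd (P.parts_pos hm) (by omega)),
          Multiset.count_eq_zero_of_notMem (fun hm => absurd (P'.parts_pos hm) (by omega))]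
      · have h2 := DFunLike.congr_fun h j
        rw [lP_apply, lP_apply] at h2
        exact Nat.eq_of_mul_eq_mul_left hj h2
    exact Nat.Partition.ext (Multiset.ext.2 hcount)
  · -- surjective
    intro l hl
    rw [Finset.mem_filter, Finset.mem_finsuppAntidiag] at hl
    obtain ⟨⟨hsum, hsupp⟩, hdvd⟩ := hl
    refine ⟨⟨∑ i ∈ Finset.Icc 1 d, Multiset.replicate (l i / i) i, ?_, ?_⟩, ?_, ?_⟩
    · intro j hj
      rw [Multiset.mem_sum] at hj
      obtain ⟨i, hi, hji⟩ := hj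
      rw [Multiset.eq_of_mem_replicate hji]
      exact (Finset.mem_Icc.1 hi).1
    · rw [multiset_sum_sum]
      calc ∑ i ∈ Finset.Icc 1 d, (Multiset.replicate (l i / i) i).sum
          = ∑ i ∈ Finset.Icc 1 d, l i := by
            refine Finset.sum_congr rfl fun i hi => ?_
            rw [Multiset.sum_replicate, smul_eq_mul, mul_comm,
              Nat.mul_div_cancel' (hdvd i hi)]
        _ = n := hsum
    · exact Finset.mem_filter.2 ⟨Finset.mem_univ _, by
        intro j hj
        rw [Multiset.mem_sum] at hj
        obtain ⟨i, hi, hji⟩ := hj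
        rw [Multiset.eq_of_mem_replicate hji]
        exact (Finset.mem_Icc.1 hi).2⟩
    · -- lP (j l) = l
      ext a
      rw [lP_apply]
      have hcount : (∑ i ∈ Finset.Icc 1 d, Multiset.replicate (l i / i) i).count a
          = ∑ i ∈ Finset.Icc 1 d, if i = a then l i / i else 0 := by
        rw [Multiset.count_sum']
        exact Finset.sum_congr rfl fun i _ => Multiset.count_replicate a i (l i / i)
      by_cases ha : a ∈ Finset.Icc 1 d
      · rw [hcount, Finset.sum_ite_eq' (Finset.Icc 1 d) a (fun i => l i / i), if_pos ha,
          Nat.mul_div_cancel' (hdvd a ha)]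
      · have h1 : l a = 0 := by
          by_contra h0
          exact ha (hsupp (Finsupp.mem_support_iff.2 h0))
        rw [hcount, Finset.sum_eq_zero
            (fun i hi => if_neg (fun hai => ha (by rw [← hai]; exact hi))),
          mul_zero, h1]
  · -- values
    intro P hP
    have hP2 := (Finset.mem_filter.1 hP).2
    have hsub : P.parts.toFinset ⊆ Finset.Icc 1 d := fun j hj => Finset.mem_Icc.2
      ⟨P.parts_pos (Multiset.mem_toFinset.1 hj), hP2 j (Multiset.mem_toFinset.1 hj)⟩
    rw [hF]
    dsimp only
    have hterm : ∀ i ∈ Finset.Icc 1 d,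
        (if i ∣ lP P i
          then algebraMap ℚ R (((lP P i / i).factorial : ℚ))⁻¹ * (x * q i) ^ (lP P i / i)
          else 0)
        = algebraMap ℚ R (((P.parts.count i).factorial : ℚ))⁻¹ * x ^ P.parts.count i
            * q i ^ P.parts.count i := by
      intro i hi
      have h1 : 1 ≤ i := (Finset.mem_Icc.1 hi).1
      rw [lP_apply, if_pos (Dvd.intro _ rfl), Nat.mul_div_cancel_left _ (by omega), mul_pow]
      ring
    rw [Finset.prod_congr rfl hterm]
    rw [Finset.prod_mul_distrib, Finset.prod_mul_distrib, Finset.prod_pow_eq_pow_sum]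
    have e1 : ∏ i ∈ Finset.Icc 1 d, algebraMap ℚ R (((P.parts.count i).factorial : ℚ))⁻¹
        = algebraMap ℚ R ((autCard P : ℚ))⁻¹ := by
      have hnat : (∏ i ∈ P.parts.toFinset, (P.parts.count i).factorial)
          = ∏ i ∈ Finset.Icc 1 d, (P.parts.count i).factorial :=
        Finset.prod_subset hsub (fun i _ hni => by
          rw [Multiset.count_eq_zero_of_notMem (fun h => hni (Multiset.mem_toFinset.2 h))]
          rfl)
      rw [← map_prod, Finset.prod_inv_distrib]
      congr 1
      rw [autCard, hnat, Nat.cast_prod]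
    have e2 : ∑ i ∈ Finset.Icc 1 d, P.parts.count i = Multiset.card P.parts := by
      rw [Multiset.sum_count_eq_card (fun a ha => hsub (Multiset.mem_toFinset.2 ha))]
    have e3 : ∏ i ∈ Finset.Icc 1 d, q i ^ P.parts.count i = (P.parts.map q).prod := by
      have hq2 : (∏ i ∈ P.parts.toFinset, q i ^ P.parts.count i)
          = ∏ i ∈ Finset.Icc 1 d, q i ^ P.parts.count i :=
        Finset.prod_subset hsub (fun i _ hni => by
          rw [Multiset.count_eq_zero_of_notMem (fun h => hni (Multiset.mem_toFinset.2 h)),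
            pow_zero])
      rw [Finset.prod_multiset_map_count, hq2]
    rw [e1, e2, e3]

section Main
variable (d : ℕ) (q : ℕ → R) (s : R)

lemma constantCoeff_CsQ : constantCoeff (R := R) (C (R := R) s * Qser R d q) = 0 := by
  rw [map_mul, constantCoeff_Qser, mul_zero]

lemma constantCoeff_negCsQ : constantCoeff (R := R) (-(C (R := R) s * Qser R d q)) = 0 := by
  rw [map_neg, constantCoeff_CsQ, neg_zero]

/-- `g = exp(-sQ)` -/
noncomputable def gg : PowerSeries R := pexp R (-(C (R := R) s * Qser R d q))
/-- `h = exp(sQ) = g⁻¹` -/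
noncomputable def hh : PowerSeries R := pexp R (C (R := R) s * Qser R d q)

lemma gg_mul_hh : gg d q s * hh d q s = 1 := by
  rw [gg, hh, ← pexp_mul_neg (constantCoeff_negCsQ d q s), neg_neg]

lemma Xser_eq : Xser R d q s = X * gg d q s := rfl

lemma constantCoeff_Xser : constantCoeff (R := R) (Xser R d q s) = 0 := by
  rw [Xser_eq, map_mul, constantCoeff_X, zero_mul]

lemma nsmul_CsQ (m : ℕ) : m • (C (R := R) s * Qser R d q) = C (R := R) ((m : R) * s) * Qser R d q := by
  rw [nsmul_eq_mul, ← map_natCast (C (R := R)) m, ← mul_assoc, ← map_mul]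

lemma hh_pow (m : ℕ) : (hh d q s) ^ m = pexp R (C (R := R) ((m : R) * s) * Qser R d q) := by
  rw [hh, pexp_nsmul (constantCoeff_CsQ d q s), nsmul_CsQ]

lemma gg_pow (a : ℕ) : (gg d q s) ^ a = pexp R (-(C (R := R) ((a : R) * s) * Qser R d q)) := by
  rw [gg, pexp_nsmul (constantCoeff_negCsQ d q s), smul_neg, nsmul_CsQ]

/-- coeff of `X * f'` -/
lemma coeff_X_mul_derivative (f : PowerSeries R) (k : ℕ) :
    coeff (R := R) k (X * d⁄dX R f) = (k : R) * coeff (R := R) k f := by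
  cases k with
  | zero => rw [mul_comm, coeff_zero_mul_X, Nat.cast_zero, zero_mul]
  | succ n => rw [coeff_succ_X_mul, PowerSeries.coeff_derivative]; push_cast; ring

lemma deriv_hh_pow (b : ℕ) :
    (X : PowerSeries R) * d⁄dX R ((hh d q s) ^ b)
      = -(b : PowerSeries R) * (X * d⁄dX R (gg d q s) * (hh d q s) ^ (b + 1)) := by
  rcases Nat.eq_zero_or_pos b with rfl | hb
  · simp
  have hDh : d⁄dX R (hh d q s) = -(d⁄dX R (gg d q s)) * (hh d q s) ^ 2 := by
    have h0 : d⁄dX R (gg d q s * hh d q s) = 0 := by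
      rw [gg_mul_hh]; exact Derivation.map_one_eq_zero _
    rw [Derivation.leibniz, smul_eq_mul, smul_eq_mul] at h0
    have h2 : gg d q s * d⁄dX R (hh d q s) = -(hh d q s * d⁄dX R (gg d q s)) :=
      eq_neg_of_add_eq_zero_left h0
    have h3 : d⁄dX R (hh d q s) = hh d q s * (gg d q s * d⁄dX R (hh d q s)) := by
      rw [← mul_assoc, mul_comm (hh d q s) (gg d q s), gg_mul_hh, one_mul]
    rw [h3, h2]; ring
  rw [Derivation.leibniz_pow, hDh, smul_eq_mul, nsmul_eq_mul]
  have hb1 : b - 1 + 2 = b + 1 := by omega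
  calc (X : PowerSeries R) * ((b : PowerSeries R) *
        ((hh d q s) ^ (b-1) * (-(d⁄dX R (gg d q s)) * (hh d q s) ^ 2)))
      = -(b : PowerSeries R) * (X * d⁄dX R (gg d q s) * ((hh d q s) ^ (b-1) * (hh d q s) ^ 2)) := by
        ring
    _ = -(b : PowerSeries R) * (X * d⁄dX R (gg d q s) * (hh d q s) ^ (b + 1)) := by
        rw [← pow_add, hb1]

lemma key_coeff (b k : ℕ) :
    (b : R) * coeff (R := R) k (X * d⁄dX R (gg d q s) * (hh d q s) ^ (b+1))
      = -((k : R) * coeff (R := R) k ((hh d q s) ^ b)) := by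
  have h1 := congrArg (coeff (R := R) k) (deriv_hh_pow d q s b)
  rw [coeff_X_mul_derivative, neg_mul, map_neg, ← map_natCast (C (R := R)) b, coeff_C_mul] at h1
  linear_combination h1

lemma alg_inv_mul_cancel {k : ℕ} (hk : k ≠ 0) :
    algebraMap ℚ R ((k : ℚ))⁻¹ * (k : R) = 1 := by
  rw [← map_natCast (algebraMap ℚ R) k, ← map_mul,
    inv_mul_cancel₀ (Nat.cast_ne_zero.2 hk), map_one]

lemma nat_mul_cancel {k : ℕ} (hk : k ≠ 0) {x y : R} (h : (k : R) * x = (k : R) * y) :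
    x = y := by
  calc x = algebraMap ℚ R ((k : ℚ))⁻¹ * ((k : R) * x) := by
        rw [← mul_assoc, alg_inv_mul_cancel hk, one_mul]
    _ = algebraMap ℚ R ((k : ℚ))⁻¹ * ((k : R) * y) := by rw [h]
    _ = y := by rw [← mul_assoc, alg_inv_mul_cancel hk, one_mul]

/-- `W_k = h^k + X g' h^(k+1)`. -/
noncomputable def Wser (k : ℕ) : PowerSeries R :=
  (hh d q s) ^ k + X * d⁄dX R (gg d q s) * (hh d q s) ^ (k+1)

lemma coeff_W_self (k : ℕ) : coeff (R := R) k (Wser d q s k) = if k = 0 then 1 else 0 := by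
  rw [Wser, map_add]
  rcases eq_or_ne k 0 with rfl | hk
  · simp
  · rw [if_neg hk]
    have h := key_coeff d q s k k
    have h2 : (k : R) * (coeff (R := R) k ((hh d q s) ^ k)
        + coeff (R := R) k (X * d⁄dX R (gg d q s) * (hh d q s) ^ (k+1))) = (k : R) * 0 := by
      linear_combination h
    exact nat_mul_cancel hk h2

lemma gg_pow_mul_hh_pow {a m : ℕ} (ham : a ≤ m) :
    (gg d q s) ^ a * (hh d q s) ^ m = (hh d q s) ^ (m - a) := by
  have hm : m = a + (m - a) := by omega
  have hsplit : (hh d q s) ^ m = (hh d q s) ^ a * (hh d q s) ^ (m - a) := by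
    rw [← pow_add, ← hm]
  rw [hsplit, ← mul_assoc, ← mul_pow, gg_mul_hh, one_pow, one_mul]

lemma Xser_pow_mul_W {ν μ : ℕ} (hν : ν ≤ μ) :
    (Xser R d q s) ^ ν * Wser d q s μ = X ^ ν * Wser d q s (μ - ν) := by
  rw [Xser_eq, mul_pow, Wser, Wser]
  have h1 : (gg d q s) ^ ν * (hh d q s) ^ μ = (hh d q s) ^ (μ - ν) :=
    gg_pow_mul_hh_pow d q s hν
  have h2 : (gg d q s) ^ ν * (hh d q s) ^ (μ + 1) = (hh d q s) ^ ((μ - ν) + 1) := by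
    have e : μ + 1 - ν = μ - ν + 1 := by omega
    rw [gg_pow_mul_hh_pow d q s (by omega), e]
  calc X ^ ν * (gg d q s) ^ ν * ((hh d q s) ^ μ
        + X * d⁄dX R (gg d q s) * (hh d q s) ^ (μ+1))
      = X ^ ν * ((gg d q s) ^ ν * (hh d q s) ^ μ)
        + X ^ ν * (X * d⁄dX R (gg d q s)) * ((gg d q s) ^ ν * (hh d q s) ^ (μ+1)) := by ring
    _ = X ^ ν * ((hh d q s) ^ (μ - ν)
        + X * d⁄dX R (gg d q s) * (hh d q s) ^ ((μ - ν) + 1)) := by rw [h1, h2]; ring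

lemma coeff_Xser_pow_W {ν μ : ℕ} (hν : ν ≤ μ) :
    coeff (R := R) μ ((Xser R d q s) ^ ν * Wser d q s μ) = if ν = μ then 1 else 0 := by
  rw [Xser_pow_mul_W d q s hν, PowerSeries.coeff_X_pow_mul', if_pos hν, coeff_W_self]
  split_ifs with h1 h2 h2
  · rfl
  · omega
  · omega
  · rfl

lemma Lext (A : PowerSeries R) (b : ℕ → R)
    (hb : ∀ k, coeff (R := R) k A = ∑ ν ∈ range (k+1), b ν * coeff (R := R) k ((Xser R d q s) ^ ν))
    (μ : ℕ) : b μ = coeff (R := R) μ (A * Wser d q s μ) := by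
  rw [coeff_mul]
  have hstep : ∀ p ∈ antidiagonal μ, coeff (R := R) p.1 A * coeff (R := R) p.2 (Wser d q s μ)
      = ∑ ν ∈ range (μ+1),
          b ν * coeff (R := R) p.1 ((Xser R d q s) ^ ν) * coeff (R := R) p.2 (Wser d q s μ) := by
    intro p hp
    rw [Finset.HasAntidiagonal.mem_antidiagonal] at hp
    rw [hb p.1, Finset.sum_mul]
    apply Finset.sum_subset (Finset.range_subset_range.2 (by omega))
    intro ν _ hν'
    rw [Finset.mem_range, not_lt] at hν'
    rw [coeff_pow_eq_zero' (constantCoeff_Xser d q s) (by omega), mul_zero, zero_mul]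
  rw [Finset.sum_congr rfl hstep, Finset.sum_comm]
  have hstep2 : ∀ ν ∈ range (μ+1),
      (∑ p ∈ antidiagonal μ,
        b ν * coeff (R := R) p.1 ((Xser R d q s) ^ ν) * coeff (R := R) p.2 (Wser d q s μ))
      = if ν = μ then b μ else 0 := by
    intro ν hν
    rw [Finset.mem_range] at hν
    have : (∑ p ∈ antidiagonal μ,
        b ν * coeff (R := R) p.1 ((Xser R d q s) ^ ν) * coeff (R := R) p.2 (Wser d q s μ))
        = b ν * coeff (R := R) μ ((Xser R d q s) ^ ν * Wser d q s μ) := by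
      rw [coeff_mul, Finset.mul_sum]
      exact Finset.sum_congr rfl fun p _ => by ring
    rw [this, coeff_Xser_pow_W d q s (by omega)]
    split_ifs with hνμ
    · rw [hνμ, mul_one]
    · rw [mul_zero]
  rw [Finset.sum_congr rfl hstep2, Finset.sum_ite_eq' (range (μ+1)) μ (fun _ => b μ),
    if_pos (Finset.self_mem_range_succ μ)]

end Main
end Aux

/-- The two expressions for the genus-`0`, two-point double Hurwitz generating series
coincide:
`DH_{0,2}(μ₁,μ₂) = (1/(μ₁μ₂)) ∑_{a=1}^{μ₂} a (∑_{λ⊢μ₁+a}(μ₁s)^{ℓ}q_λ/|Aut λ|)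
  (∑_{λ⊢μ₂−a}(μ₂s)^{ℓ}q_λ/|Aut λ|) = −[X₁^{μ₁}X₂^{μ₂}] ∑_{a≥1} z₁^{−a} z₂^{a}/a`,
where `z^a` has `X`-expansion coefficients `c a ·` and `z^{−a} = X^{−a} e^{−asQ(z)}`, so that
`[X^{μ₁}] z^{−a}` is the coefficient `e a (μ₁+a)` of the `X`-expansion of `e^{−asQ(z)}`; only
`a ≤ μ₂` contributes since `c a μ₂ = 0` for `a > μ₂`. -/
theorem DH02_two_expressions (R : Type*) [CommRing R] [Algebra ℚ R]
    (d : ℕ) (q : ℕ → R) (hq : ∀ i, d < i → q i = 0) (s : R)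
    (μ₁ μ₂ : ℕ) (hμ₁ : 0 < μ₁) (hμ₂ : 0 < μ₂)
    (c : ℕ → ℕ → R)
    (hc : ∀ a : ℕ, 1 ≤ a → ∀ k : ℕ,
      PowerSeries.coeff (R := R) k ((PowerSeries.X : PowerSeries R) ^ a)
        = ∑ ν ∈ Finset.range (k + 1), c a ν * PowerSeries.coeff (R := R) k ((Xser R d q s) ^ ν))
    (e : ℕ → ℕ → R)
    (he : ∀ a : ℕ, 1 ≤ a → ∀ k : ℕ,
      PowerSeries.coeff (R := R) k (expNegASQ R d q s a)
        = ∑ ν ∈ Finset.range (k + 1), e a ν * PowerSeries.coeff (R := R) k ((Xser R d q s) ^ ν)) :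
    (algebraMap ℚ R (((μ₁ : ℚ)) * ((μ₂ : ℚ)))⁻¹ *
        ∑ a ∈ Finset.Icc 1 μ₂, (a : R) *
          partitionSum R q ((μ₁ : R) * s) (μ₁ + a) *
          partitionSum R q ((μ₂ : R) * s) (μ₂ - a)
      = - ∑ a ∈ Finset.Icc 1 μ₂,
          algebraMap ℚ R ((a : ℚ))⁻¹ * e a (μ₁ + a) * c a μ₂)
    ∧ ∀ a : ℕ, μ₂ < a → c a μ₂ = 0 := by
  have hcoeffh : ∀ m n : ℕ, coeff (R := R) n ((hh d q s) ^ m) = partitionSum R q ((m : R) * s) n := by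
    intro m n
    rw [hh_pow, coeff_pexp_CQ d q hq]
  have hcW : ∀ a : ℕ, 1 ≤ a → ∀ μ : ℕ,
      c a μ = coeff (R := R) μ ((X : PowerSeries R) ^ a * Wser d q s μ) :=
    fun a ha μ => Lext d q s _ (c a) (hc a ha) μ
  have heW : ∀ a : ℕ, 1 ≤ a → ∀ μ : ℕ,
      e a μ = coeff (R := R) μ ((gg d q s) ^ a * Wser d q s μ) := by
    intro a ha μ
    refine Lext d q s _ (e a) (fun k => ?_) μ
    rw [gg_pow]
    exact he a ha k
  have part2 : ∀ a : ℕ, μ₂ < a → c a μ₂ = 0 := by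
    intro a ha
    rw [hcW a (by omega) μ₂]
    exact X_pow_dvd_iff.1 (dvd_mul_right _ _) μ₂ ha
  refine ⟨?_, part2⟩
  have hcval : ∀ a : ℕ, a ∈ Finset.Icc 1 μ₂ →
      c a μ₂ = algebraMap ℚ R ((μ₂ : ℚ))⁻¹
        * ((a : R) * partitionSum R q ((μ₂ : R) * s) (μ₂ - a)) := by
    intro a ha
    rw [Finset.mem_Icc] at ha
    have hmul : (μ₂ : R) * c a μ₂
        = (a : R) * partitionSum R q ((μ₂ : R) * s) (μ₂ - a) := by
      rw [hcW a ha.1 μ₂, PowerSeries.coeff_X_pow_mul', if_pos ha.2, Wser, map_add]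
      have hk := key_coeff d q s μ₂ (μ₂ - a)
      rw [Nat.cast_sub ha.2] at hk
      rw [hcoeffh μ₂ (μ₂ - a)] at hk ⊢
      linear_combination hk
    rw [← hmul, ← mul_assoc, alg_inv_mul_cancel (by omega : μ₂ ≠ 0), one_mul]
  have heval : ∀ a : ℕ, a ∈ Finset.Icc 1 μ₂ →
      e a (μ₁ + a) = algebraMap ℚ R ((μ₁ : ℚ))⁻¹
        * (-((a : R) * partitionSum R q ((μ₁ : R) * s) (μ₁ + a))) := by
    intro a ha
    rw [Finset.mem_Icc] at ha
    have hW : (gg d q s) ^ a * Wser d q s (μ₁ + a) = Wser d q s μ₁ := by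
      rw [Wser, Wser]
      have h1 : (gg d q s) ^ a * (hh d q s) ^ (μ₁ + a) = (hh d q s) ^ μ₁ := by
        have h := gg_pow_mul_hh_pow d q s (show a ≤ μ₁ + a by omega)
        rwa [show μ₁ + a - a = μ₁ by omega] at h
      have h2 : (gg d q s) ^ a * (hh d q s) ^ ((μ₁ + a) + 1) = (hh d q s) ^ (μ₁ + 1) := by
        have h := gg_pow_mul_hh_pow d q s (show a ≤ μ₁ + a + 1 by omega)
        rwa [show μ₁ + a + 1 - a = μ₁ + 1 by omega] at h
      calc (gg d q s) ^ a * ((hh d q s) ^ (μ₁ + a)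
            + X * d⁄dX R (gg d q s) * (hh d q s) ^ ((μ₁ + a) + 1))
          = ((gg d q s) ^ a * (hh d q s) ^ (μ₁ + a))
            + X * d⁄dX R (gg d q s) * ((gg d q s) ^ a * (hh d q s) ^ ((μ₁ + a) + 1)) := by
            ring
        _ = (hh d q s) ^ μ₁ + X * d⁄dX R (gg d q s) * (hh d q s) ^ (μ₁ + 1) := by
            rw [h1, h2]
    have hmul : (μ₁ : R) * e a (μ₁ + a)
        = -((a : R) * partitionSum R q ((μ₁ : R) * s) (μ₁ + a)) := by
      rw [heW a ha.1 (μ₁ + a), hW, Wser, map_add]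
      have hk := key_coeff d q s μ₁ (μ₁ + a)
      rw [hcoeffh μ₁ (μ₁ + a)] at hk ⊢
      push_cast at hk
      linear_combination hk
    rw [← hmul, ← mul_assoc, alg_inv_mul_cancel (by omega : μ₁ ≠ 0), one_mul]
  rw [Finset.mul_sum, ← Finset.sum_neg_distrib]
  refine Finset.sum_congr rfl fun a ha => ?_
  have ha' := Finset.mem_Icc.1 ha
  rw [hcval a ha, heval a ha]
  have hca : algebraMap ℚ R ((a : ℚ))⁻¹ * (a : R) = 1 := alg_inv_mul_cancel (by omega)
  rw [mul_inv, map_mul]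
  set P1 := partitionSum R q ((μ₁ : R) * s) (μ₁ + a) with hP1
  set P2 := partitionSum R q ((μ₂ : R) * s) (μ₂ - a) with hP2
  linear_combination (-(algebraMap ℚ R ((μ₁ : ℚ))⁻¹ * algebraMap ℚ R ((μ₂ : ℚ))⁻¹
    * (a : R) * P1 * P2)) * hca
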